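/- Let n ≥ 4 and let m₂₂, m₃₂ ∈ ℂ with m₂₂·m₃₂ ≠ 0. Put M = [[1,−m₂₂/m₃₂,0],[0,m₂₂,0],[0,m₃₂,1]] and let N = (n_{pq}) be a 3×3 complex matrix. If the pair (M,N) satisfies the SMₙ mixed relations on M_{n+1}(ℂ), then n₁₁ = 1, n₁₃ = n₂₁ = n₂₃ = n₃₁ = 0, n₃₃ = 1, n₂₂ = 1 − m₃₂n₁₂ + m₃₂n₁₂/m₂₂, and n₃₂ = −m₃₂²n₁₂/m₂₂. -/

import Mathlib

open Matrix

def loc3 (m i : ℕ) (P : Matrix (Fin 3) (Fin 3) ℂ) : Matrix (Fin m) (Fin m) ℂ :=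
  Matrix.of fun r s =>
    if (r : ℕ) = i - 1 ∧ (s : ℕ) = i - 1 then P 0 0
    else if (r : ℕ) = i - 1 ∧ (s : ℕ) = i then P 0 1
    else if (r : ℕ) = i - 1 ∧ (s : ℕ) = i + 1 then P 0 2
    else if (r : ℕ) = i ∧ (s : ℕ) = i - 1 then P 1 0
    else if (r : ℕ) = i ∧ (s : ℕ) = i then P 1 1
    else if (r : ℕ) = i ∧ (s : ℕ) = i + 1 then P 1 2
    else if (r : ℕ) = i + 1 ∧ (s : ℕ) = i - 1 then P 2 0
    else if (r : ℕ) = i + 1 ∧ (s : ℕ) = i then P 2 1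
    else if (r : ℕ) = i + 1 ∧ (s : ℕ) = i + 1 then P 2 2
    else if r = s then 1 else 0

/-- The pair `(M, N)` of 3×3 complex matrices satisfies the SMₙ mixed relations
on `M_{n+1}(ℂ)`. -/
def SMRel3 (n : ℕ) (M N : Matrix (Fin 3) (Fin 3) ℂ) : Prop :=
  (∀ i j : ℕ, 1 ≤ i → i ≤ n - 1 → 1 ≤ j → j ≤ n - 1 → (i + 2 ≤ j ∨ j + 2 ≤ i) →
      loc3 (n + 1) i N * loc3 (n + 1) j N = loc3 (n + 1) j N * loc3 (n + 1) i N) ∧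
  (∀ i j : ℕ, 1 ≤ i → i ≤ n - 1 → 1 ≤ j → j ≤ n - 1 → (i + 2 ≤ j ∨ j + 2 ≤ i) →
      loc3 (n + 1) i N * loc3 (n + 1) j M = loc3 (n + 1) j M * loc3 (n + 1) i N) ∧
  (∀ i : ℕ, 1 ≤ i → i ≤ n - 1 →
      loc3 (n + 1) i M * loc3 (n + 1) i N = loc3 (n + 1) i N * loc3 (n + 1) i M) ∧
  (∀ i : ℕ, 1 ≤ i → i ≤ n - 2 →
      loc3 (n + 1) i M * loc3 (n + 1) (i + 1) M * loc3 (n + 1) i N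
        = loc3 (n + 1) (i + 1) N * loc3 (n + 1) i M * loc3 (n + 1) (i + 1) M) ∧
  (∀ i : ℕ, 1 ≤ i → i ≤ n - 2 →
      loc3 (n + 1) (i + 1) M * loc3 (n + 1) i M * loc3 (n + 1) (i + 1) N
        = loc3 (n + 1) i N * loc3 (n + 1) (i + 1) M * loc3 (n + 1) i M)

private def cor5 {m : ℕ} (h5 : 5 ≤ m) (A : Matrix (Fin m) (Fin m) ℂ) :
    Matrix (Fin 5) (Fin 5) ℂ :=
  A.submatrix (Fin.castLE h5) (Fin.castLE h5)

private lemma sum_five {m : ℕ} (h5 : 5 ≤ m) (f : Fin m → ℂ)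
    (hf : ∀ k : Fin m, 5 ≤ (k : ℕ) → f k = 0) :
    (∑ k, f k) = ∑ j : Fin 5, f (Fin.castLE h5 j) := by
  symm
  have : ∑ j : Fin 5, f (Fin.castLE h5 j)
      = ∑ k ∈ Finset.univ.map (Fin.castLEEmb h5), f k := by
    rw [Finset.sum_map]; rfl
  rw [this]
  apply Finset.sum_subset (Finset.subset_univ _)
  intro x _ hx
  apply hf
  by_contra hc
  push_neg at hc
  exact hx (Finset.mem_map.2 ⟨⟨(x : ℕ), hc⟩, Finset.mem_univ _, rfl⟩)

private lemma cor5_mul {m : ℕ} (h5 : 5 ≤ m) (A B : Matrix (Fin m) (Fin m) ℂ)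
    (hA : ∀ r k : Fin m, (r : ℕ) < 5 → 5 ≤ (k : ℕ) → A r k = 0) :
    cor5 h5 (A * B) = cor5 h5 A * cor5 h5 B := by
  ext r s
  simp only [cor5, Matrix.submatrix_apply, Matrix.mul_apply]
  exact sum_five h5 _ fun k hk => by
    rw [hA _ k (by simp) hk, zero_mul]

private lemma cor5_loc3 {m : ℕ} (h5 : 5 ≤ m) (i : ℕ) (P : Matrix (Fin 3) (Fin 3) ℂ) :
    cor5 h5 (loc3 m i P) = loc3 5 i P := by
  ext r s
  simp only [cor5, Matrix.submatrix_apply, loc3, Matrix.of_apply, Fin.coe_castLE]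
  congr 1
  simp [Fin.castLE_inj]

private lemma loc3_zero {m : ℕ} (i : ℕ) (hi : i ≤ 3) (P : Matrix (Fin 3) (Fin 3) ℂ)
    (r k : Fin m) (hr : (r : ℕ) < 5) (hk : 5 ≤ (k : ℕ)) : loc3 m i P r k = 0 := by
  have : (r : ℕ) ≠ (k : ℕ) := by omega
  simp only [loc3, Matrix.of_apply]
  rw [if_neg, if_neg, if_neg, if_neg, if_neg, if_neg, if_neg, if_neg, if_neg, if_neg] <;>
    first
      | (intro hrs; exact this (by rw [hrs]))
      | (rintro ⟨-, h2⟩; omega)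

theorem stmt11 (n : ℕ) (hn : 4 ≤ n) (m22 m32 : ℂ) (hm : m22 * m32 ≠ 0)
    (N : Matrix (Fin 3) (Fin 3) ℂ)
    (h : SMRel3 n !![1, -m22 / m32, 0; 0, m22, 0; 0, m32, 1] N) :
    N 0 0 = 1 ∧ N 0 2 = 0 ∧ N 1 0 = 0 ∧ N 1 2 = 0 ∧ N 2 0 = 0 ∧ N 2 2 = 1 ∧
    N 1 1 = 1 - m32 * N 0 1 + m32 * N 0 1 / m22 ∧
    N 2 1 = -(m32 ^ 2 * N 0 1) / m22 := by
  have ha : m22 ≠ 0 := fun h0 => hm (by rw [h0, zero_mul])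
  have hb : m32 ≠ 0 := fun h0 => hm (by rw [h0, mul_zero])
  obtain ⟨-, h2, h3, h4, -⟩ := h
  set M : Matrix (Fin 3) (Fin 3) ℂ := !![1, -m22 / m32, 0; 0, m22, 0; 0, m32, 1] with hMdef
  have h5 : (5 : ℕ) ≤ n + 1 := by omega
  have e13 := h2 1 3 (by omega) (by omega) (by omega) (by omega) (Or.inl (by omega))
  have e31 := h2 3 1 (by omega) (by omega) (by omega) (by omega) (Or.inr (by omega))
  have ecm := h3 1 (by omega) (by omega)
  have ebr := h4 1 (by omega) (by omega)
  -- corner reductions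
  have c13 : loc3 5 1 N * loc3 5 3 M = loc3 5 3 M * loc3 5 1 N := by
    have t := congrArg (cor5 h5) e13
    rwa [cor5_mul h5 _ _ (loc3_zero 1 (by norm_num) N),
      cor5_mul h5 _ _ (loc3_zero 3 (by norm_num) M),
      cor5_loc3, cor5_loc3] at t
  have c31 : loc3 5 3 N * loc3 5 1 M = loc3 5 1 M * loc3 5 3 N := by
    have t := congrArg (cor5 h5) e31
    rwa [cor5_mul h5 _ _ (loc3_zero 3 (by norm_num) N),
      cor5_mul h5 _ _ (loc3_zero 1 (by norm_num) M),
      cor5_loc3, cor5_loc3] at t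
  have ccm : loc3 5 1 M * loc3 5 1 N = loc3 5 1 N * loc3 5 1 M := by
    have t := congrArg (cor5 h5) ecm
    rwa [cor5_mul h5 _ _ (loc3_zero 1 (by norm_num) M),
      cor5_mul h5 _ _ (loc3_zero 1 (by norm_num) N),
      cor5_loc3, cor5_loc3] at t
  have cbr : loc3 5 1 M * (loc3 5 2 M * loc3 5 1 N)
      = loc3 5 2 N * (loc3 5 1 M * loc3 5 2 M) := by
    have t := congrArg (cor5 h5) ebr
    rw [mul_assoc, mul_assoc] at t
    rwa [cor5_mul h5 _ _ (loc3_zero 1 (by norm_num) M),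
      cor5_mul h5 _ _ (loc3_zero 2 (by norm_num) M),
      cor5_mul h5 _ _ (loc3_zero 2 (by norm_num) N),
      cor5_mul h5 _ _ (loc3_zero 1 (by norm_num) M),
      cor5_loc3, cor5_loc3, cor5_loc3, cor5_loc3] at t
  -- scalar equations
  have q1 : (loc3 5 1 N * loc3 5 3 M) 0 3 = (loc3 5 3 M * loc3 5 1 N) 0 3 := by rw [c13]
  have q2 : (loc3 5 1 N * loc3 5 3 M) 1 3 = (loc3 5 3 M * loc3 5 1 N) 1 3 := by rw [c13]
  have q3 : (loc3 5 1 N * loc3 5 3 M) 2 3 = (loc3 5 3 M * loc3 5 1 N) 2 3 := by rw [c13]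
  have q4 : (loc3 5 3 N * loc3 5 1 M) 2 1 = (loc3 5 1 M * loc3 5 3 N) 2 1 := by rw [c31]
  have q5 : (loc3 5 3 N * loc3 5 1 M) 3 1 = (loc3 5 1 M * loc3 5 3 N) 3 1 := by rw [c31]
  have q6 : (loc3 5 3 N * loc3 5 1 M) 4 1 = (loc3 5 1 M * loc3 5 3 N) 4 1 := by rw [c31]
  have q7 : (loc3 5 1 M * loc3 5 1 N) 0 1 = (loc3 5 1 N * loc3 5 1 M) 0 1 := by rw [ccm]
  have q8 : (loc3 5 1 M * (loc3 5 2 M * loc3 5 1 N)) 0 1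
      = (loc3 5 2 N * (loc3 5 1 M * loc3 5 2 M)) 0 1 := by rw [cbr]
  simp only [hMdef] at q1 q2 q3 q4 q5 q6 q7 q8
  simp [loc3, Matrix.mul_apply, Fin.sum_univ_five,
    show ((2:Fin 5):ℕ)=2 from rfl, show ((3:Fin 5):ℕ)=3 from rfl,
    show ((4:Fin 5):ℕ)=4 from rfl] at q1 q2 q3 q4 q5 q6 q7 q8
  have h02 : N 0 2 = 0 := by
    rcases q1 with h|h|h
    exacts [h, absurd h ha, absurd h hb]
  have h12 : N 1 2 = 0 := by
    rcases q2 with h|h|h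
    exacts [h, absurd h ha, absurd h hb]
  have h10 : N 1 0 = 0 := by
    rcases q5 with h|h
    exacts [h, absurd h hb]
  have h20 : N 2 0 = 0 := by
    rcases q6 with h|h
    exacts [h, absurd h hb]
  have h22 : N 2 2 = 1 :=
    mul_right_cancel₀ (div_ne_zero (neg_ne_zero.2 ha) hb) (by rw [q3, one_mul])
  have h00 : N 0 0 = 1 := mul_right_cancel₀ hb (by rw [q4, one_mul])
  rw [h00, h02] at q7
  have h11 : N 1 1 = 1 - m32 * N 0 1 + m32 * N 0 1 / m22 := by
    field_simp at q7 ⊢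
    linear_combination -q7
  rw [h11] at q8
  have h21 : N 2 1 = -(m32 ^ 2 * N 0 1) / m22 := by
    field_simp at q8 ⊢
    have h9 : m22 ^ 2 * m32 * (m22 * N 2 1 + m32 ^ 2 * N 0 1) = 0 := by linear_combination (m22 * m32) * q8
    have hz : m22 * N 2 1 + m32 ^ 2 * N 0 1 = 0 :=
      (mul_eq_zero.1 h9).resolve_left (mul_ne_zero (pow_ne_zero 2 ha) hb)
    linear_combination hz
  exact ⟨h00, h02, h10, h12, h20, h22, h11, h21⟩
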